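/- In the FLO setting, for fixed g the function u maximizing I_FLO(g,u) pointwise is u_g(x,y) = log E_{p(y')}[e^{g(x,y') - g(x,y)}], and with this choice I_FLO(g, u_g) equals the UBA bound E_{p(x,y)}[g(x,y) - log Z_g(x)]. -/

import Mathlib

/-- For a fixed critic `g`, `u_g(x,y) = log E_{p(y')}[e^{g(x,y')-g(x,y)}]`
maximizes `I_FLO(g,·)`, and with this choice `I_FLO(g,u_g)` equals the
UBA bound `E_{p(x,y)}[g(x,y) - log Z_g(x)]`. -/
theorem flo_optimal_u {α β : Type*} [Fintype α] [Fintype β]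
    (p : α → β → ℝ) (g : α → β → ℝ) (ug : α → β → ℝ)
    (hp0 : ∀ x y, 0 ≤ p x y) (hp1 : ∑ x, ∑ y, p x y = 1)
    (hpx : ∀ x, 0 < ∑ y, p x y) (hpy : ∀ y, 0 < ∑ x, p x y)
    (hug : ∀ x y, ug x y =
      Real.log (∑ y', (∑ x', p x' y') * Real.exp (g x y' - g x y))) :
    (∀ u : α → β → ℝ,
      1 - ∑ x, ∑ y, p x y * (u x y +
          Real.exp (-u x y) *
            ∑ y', (∑ x', p x' y') * Real.exp (g x y' - g x y)) ≤
      1 - ∑ x, ∑ y, p x y * (ug x y +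
          Real.exp (-ug x y) *
            ∑ y', (∑ x', p x' y') * Real.exp (g x y' - g x y))) ∧
    (1 - ∑ x, ∑ y, p x y * (ug x y +
          Real.exp (-ug x y) *
            ∑ y', (∑ x', p x' y') * Real.exp (g x y' - g x y)) =
      ∑ x, ∑ y, p x y *
        (g x y - Real.log (∑ y', (∑ x', p x' y') * Real.exp (g x y')))) := by
  have hZpos : ∀ x : α, 0 < ∑ y', (∑ x', p x' y') * Real.exp (g x y') := by
    intro x
    have hne : (Finset.univ : Finset β).Nonempty :=
      Finset.nonempty_of_sum_ne_zero (hpx x).ne'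
    exact Finset.sum_pos (fun y _ => mul_pos (hpy y) (Real.exp_pos _)) hne
  have hA : ∀ x y, (∑ y', (∑ x', p x' y') * Real.exp (g x y' - g x y))
      = Real.exp (-(g x y)) * ∑ y', (∑ x', p x' y') * Real.exp (g x y') := by
    intro x y
    rw [Finset.mul_sum]
    refine Finset.sum_congr rfl fun y' _ => ?_
    rw [Real.exp_sub, Real.exp_neg]
    ring
  have hApos : ∀ x y, 0 < ∑ y', (∑ x', p x' y') * Real.exp (g x y' - g x y) := by
    intro x y
    rw [hA]; exact mul_pos (Real.exp_pos _) (hZpos x)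
  have hlogA : ∀ x y, Real.log (∑ y', (∑ x', p x' y') * Real.exp (g x y' - g x y))
      = -(g x y) + Real.log (∑ y', (∑ x', p x' y') * Real.exp (g x y')) := by
    intro x y
    rw [hA, Real.log_mul (Real.exp_pos _).ne' (hZpos x).ne', Real.log_exp]
  have key : ∀ S : ℝ, 0 < S → ∀ t : ℝ,
      Real.log S + Real.exp (-Real.log S) * S ≤ t + Real.exp (-t) * S := by
    intro S hS t
    rw [Real.exp_neg, Real.exp_log hS, inv_mul_cancel₀ hS.ne']
    have h1 := Real.add_one_le_exp (Real.log S - t)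
    rw [Real.exp_sub, Real.exp_log hS, div_eq_mul_inv, mul_comm] at h1
    rw [Real.exp_neg]
    linarith
  constructor
  · intro u
    apply sub_le_sub_left
    refine Finset.sum_le_sum fun x _ => Finset.sum_le_sum fun y _ => ?_
    refine mul_le_mul_of_nonneg_left ?_ (hp0 x y)
    rw [hug]
    exact key _ (hApos x y) (u x y)
  · have hterm : ∀ x y, p x y * (ug x y + Real.exp (-ug x y) *
        ∑ y', (∑ x', p x' y') * Real.exp (g x y' - g x y))
        = p x y + (p x y * Real.log (∑ y', (∑ x', p x' y') * Real.exp (g x y'))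
            - p x y * g x y) := by
      intro x y
      rw [hug, Real.exp_neg, Real.exp_log (hApos x y), inv_mul_cancel₀ (hApos x y).ne',
        hlogA]
      ring
    rw [Finset.sum_congr rfl fun x _ => Finset.sum_congr rfl fun y _ => hterm x y]
    have hsplit : ∀ x : α, ∑ y, (p x y +
        (p x y * Real.log (∑ y', (∑ x', p x' y') * Real.exp (g x y')) - p x y * g x y))
        = (∑ y, p x y) + ∑ y, (p x y * Real.log (∑ y', (∑ x', p x' y') * Real.exp (g x y'))
            - p x y * g x y) := fun x => Finset.sum_add_distrib
    rw [Finset.sum_congr rfl fun x _ => hsplit x, Finset.sum_add_distrib, hp1]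
    have h : ∀ x : α, ∑ y, p x y *
        (g x y - Real.log (∑ y', (∑ x', p x' y') * Real.exp (g x y')))
        = ∑ y, -(p x y * Real.log (∑ y', (∑ x', p x' y') * Real.exp (g x y'))
            - p x y * g x y) :=
      fun x => Finset.sum_congr rfl fun y _ => by ring
    rw [Finset.sum_congr rfl fun x _ => h x,
      Finset.sum_congr rfl fun x (_ : x ∈ Finset.univ) =>
        (Finset.sum_neg_distrib (s := (Finset.univ : Finset β)) _),
      Finset.sum_neg_distrib]
    ring
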